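/- The natural map of R-modules R_f/R → R̂_f/R̂ (from the quotient of R_f by the image of R to the quotient of R̂_f by the image of R̂, induced by the canonical ring map R_f → R̂_f) is an isomorphism. -/

import Mathlib

noncomputable section

open AdicCompletion

variable (R : Type*) [CommRing R] (f : R)

/-- The `(f)`-adic completion `R̂` of `R`. -/
abbrev Rhat : Type _ := AdicCompletion (Ideal.span {f}) R

/-- The localization `R_f = R[f⁻¹]`. -/
abbrev Rf : Type _ := Localization.Away f

/-- The localization `R̂_f = R̂[ι(f)⁻¹]`. -/
abbrev Rhatf : Type _ := Localization.Away (algebraMap R (Rhat R f) f)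

/-- The canonical ring map `R_f → R̂_f` extending `ι : R → R̂`. -/
noncomputable def psi : Rf R f →+* Rhatf R f :=
  Localization.awayMap (algebraMap R (Rhat R f)) f

lemma mem_smul_top_iff (n : ℕ) (x : R) :
    x ∈ ((Ideal.span {f}) ^ n • ⊤ : Submodule R R) ↔ f ^ n ∣ x := by
  rw [smul_eq_mul, Ideal.mul_top, Ideal.span_singleton_pow, Ideal.mem_span_singleton]

lemma quot_eq_iff (n : ℕ) (x y : R) :
    (Submodule.Quotient.mk x : R ⧸ ((Ideal.span {f}) ^ n • ⊤ : Submodule R R)) =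
      Submodule.Quotient.mk y ↔ f ^ n ∣ x - y := by
  rw [Submodule.Quotient.eq, mem_smul_top_iff]

lemma fnzd (hf : f ∈ nonZeroDivisors R) :
    algebraMap R (Rhat R f) f ∈ nonZeroDivisors (Rhat R f) := by
  rw [mem_nonZeroDivisors_iff_right]
  intro c hc
  obtain ⟨z, rfl⟩ := AdicCompletion.mk_surjective (Ideal.span {f}) R c
  ext n
  have h1 : (AdicCompletion.mk _ R z * algebraMap R (Rhat R f) f).val (n+1) = 0 := by rw [hc]; rfl
  have h1' : (Submodule.Quotient.mk (z.val (n+1) * f) :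
      R ⧸ ((Ideal.span {f}) ^ (n+1) • ⊤ : Submodule R R)) = Submodule.Quotient.mk 0 := h1
  rw [quot_eq_iff, sub_zero] at h1'
  obtain ⟨t, ht⟩ := h1'
  have hdvd : f ^ n ∣ z.val (n+1) := by
    have h0 := (mem_nonZeroDivisors_iff_right.mp hf) (z.val (n+1) - f ^ n * t) (by linear_combination ht)
    exact ⟨t, by linear_combination h0⟩
  show (Submodule.Quotient.mk (z.val n) :
      R ⧸ ((Ideal.span {f}) ^ n • ⊤ : Submodule R R)) = Submodule.Quotient.mk 0
  rw [quot_eq_iff, sub_zero]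
  obtain ⟨v, hv⟩ := hdvd
  have := SModEq.sub_mem.mp (z.property (Nat.le_succ n))
  rw [mem_smul_top_iff] at this
  obtain ⟨u, hu⟩ := this
  exact ⟨u + v, by rw [mul_add, ← hu, ← hv]; ring⟩

lemma decompose (hf : f ∈ nonZeroDivisors R) (b : Rhat R f) (n : ℕ) :
    ∃ (r : R) (c : Rhat R f),
      b = algebraMap R (Rhat R f) r + algebraMap R (Rhat R f) (f ^ n) * c := by
  obtain ⟨z, rfl⟩ := AdicCompletion.mk_surjective (Ideal.span {f}) R b
  have hz : ∀ m, f ^ n ∣ z.val (n + m) - z.val n := by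
    intro m
    rw [← mem_smul_top_iff]
    exact SModEq.sub_mem.mp (z.property (Nat.le_add_right n m)).symm
  choose y hy using hz
  have hcauchy : ∀ m, y m ≡ y (m + 1) [SMOD ((Ideal.span {f}) ^ m • ⊤ : Submodule R R)] := by
    intro m
    rw [SModEq.sub_mem, mem_smul_top_iff]
    have h1 : f ^ (n + m) ∣ z.val (n + m) - z.val (n + (m+1)) := by
      rw [← mem_smul_top_iff]
      exact SModEq.sub_mem.mp (z.property (by omega))
    obtain ⟨t, ht⟩ := h1
    refine ⟨t, ?_⟩
    have h0 := (mem_nonZeroDivisors_iff_right.mp (pow_mem hf n)) (y m - y (m + 1) - f ^ m * t)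
      (by linear_combination -(hy m) + hy (m+1) + ht)
    linear_combination h0
  refine ⟨z.val n, AdicCompletion.mk _ R (AdicCauchySequence.mk _ _ y hcauchy), ?_⟩
  ext m
  show (Submodule.Quotient.mk (z.val m) : R ⧸ ((Ideal.span {f}) ^ m • ⊤ : Submodule R R)) =
    Submodule.Quotient.mk (z.val n) + Submodule.Quotient.mk (f ^ n) * Submodule.Quotient.mk (y m)
  have hrfl : (Submodule.Quotient.mk (z.val n) + Submodule.Quotient.mk (f ^ n) *
      Submodule.Quotient.mk (y m) : R ⧸ ((Ideal.span {f}) ^ m • ⊤ : Submodule R R)) =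
      Submodule.Quotient.mk (z.val n + f ^ n * y m) := rfl
  rw [hrfl, quot_eq_iff]
  have h2 : f ^ m ∣ z.val m - z.val (n + m) := by
    rw [← mem_smul_top_iff]
    exact SModEq.sub_mem.mp (z.property (Nat.le_add_left m n))
  obtain ⟨u, hu⟩ := h2
  exact ⟨u, by linear_combination hu + hy m⟩

lemma psi_algebraMap (a : R) :
    psi R f (algebraMap R (Rf R f) a) =
      algebraMap (Rhat R f) (Rhatf R f) (algebraMap R (Rhat R f) a) := by
  unfold psi Localization.awayMap IsLocalization.Away.map
  exact IsLocalization.map_eq _ _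

lemma theta_inj (hf : f ∈ nonZeroDivisors R) :
    Function.Injective (algebraMap (Rhat R f) (Rhatf R f)) := by
  refine IsLocalization.injective (M := Submonoid.powers (algebraMap R (Rhat R f) f)) (Rhatf R f) ?_
  rintro x ⟨n, rfl⟩
  exact pow_mem (fnzd R f hf) n

lemma key_dvd (n : ℕ) (b : Rhat R f) (r : R)
    (h : b * algebraMap R (Rhat R f) (f ^ n) = algebraMap R (Rhat R f) r) :
    f ^ n ∣ r := by
  have h1 := congrArg (evalₐ (Ideal.span {f}) n) h
  rw [map_mul, AlgHom.commutes, AlgHom.commutes] at h1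
  have h2 : (algebraMap R (R ⧸ Ideal.span {f} ^ n)) (f ^ n) = 0 := by
    rw [Ideal.Quotient.algebraMap_eq, Ideal.Quotient.eq_zero_iff_mem, Ideal.span_singleton_pow]
    exact Ideal.mem_span_singleton_self _
  rw [h2, mul_zero, Ideal.Quotient.algebraMap_eq] at h1
  have := (Ideal.Quotient.eq_zero_iff_mem).mp h1.symm
  rwa [Ideal.span_singleton_pow, Ideal.mem_span_singleton] at this

/-- the natural map `R_f/R → R̂_f/R̂` induced by the canonical map `R_f → R̂_f`
is an isomorphism; equivalently (stated elementwise) the induced map on quotients is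
injective (if `ψ x` lies in the image of `R̂` then `x` lies in the image of `R`) and
surjective (every `y : R̂_f` is of the form `ψ x + θ b`). -/
theorem stmt4 [IsNoetherianRing R] (hf : f ∈ nonZeroDivisors R) :
    (∀ x : Rf R f,
      (∃ b : Rhat R f, psi R f x = algebraMap (Rhat R f) (Rhatf R f) b) →
        ∃ r : R, x = algebraMap R (Rf R f) r) ∧
    (∀ y : Rhatf R f, ∃ (x : Rf R f) (b : Rhat R f),
      y = psi R f x + algebraMap (Rhat R f) (Rhatf R f) b) := by
  constructor
  · rintro x ⟨b, hb⟩
    obtain ⟨⟨r, s⟩, hs⟩ := IsLocalization.surj (Submonoid.powers f) x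
    obtain ⟨n, hn⟩ := s.2
    have h1 := congrArg (psi R f) hs
    rw [map_mul, hb, psi_algebraMap, psi_algebraMap, ← map_mul] at h1
    have h2 : b * algebraMap R (Rhat R f) (s : R) = algebraMap R (Rhat R f) r :=
      theta_inj R f hf h1
    rw [← hn] at h2
    obtain ⟨u, hu⟩ := key_dvd R f n b r h2
    refine ⟨u, ?_⟩
    have hunit : IsUnit (algebraMap R (Rf R f) (s : R)) :=
      IsLocalization.map_units (Rf R f) s
    apply hunit.mul_left_cancel
    rw [mul_comm, hs, hu, ← hn, map_mul, mul_comm]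
  · intro y
    obtain ⟨⟨b, s⟩, hs⟩ := IsLocalization.surj
      (Submonoid.powers (algebraMap R (Rhat R f) f)) y
    obtain ⟨n, hn⟩ := s.2
    obtain ⟨r, c, hbc⟩ := decompose R f hf b n
    refine ⟨IsLocalization.mk' (Rf R f) r (⟨f ^ n, n, rfl⟩ : Submonoid.powers f), c, ?_⟩
    have hunit : IsUnit (algebraMap (Rhat R f) (Rhatf R f) (s : Rhat R f)) :=
      IsLocalization.map_units (Rhatf R f) s
    apply hunit.mul_left_cancel
    rw [mul_comm, hs, mul_comm]
    have hsn : (s : Rhat R f) = algebraMap R (Rhat R f) (f ^ n) := by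
      rw [← hn, map_pow]
    rw [hsn, add_mul, ← map_mul]
    have hmk : psi R f (IsLocalization.mk' (Rf R f) r (⟨f ^ n, n, rfl⟩ : Submonoid.powers f)) *
        algebraMap (Rhat R f) (Rhatf R f) (algebraMap R (Rhat R f) (f ^ n)) =
        algebraMap (Rhat R f) (Rhatf R f) (algebraMap R (Rhat R f) r) := by
      rw [← psi_algebraMap, ← map_mul, IsLocalization.mk'_spec, psi_algebraMap]
    rw [hmk, ← (algebraMap (Rhat R f) (Rhatf R f)).map_add]
    congr 1
    rw [hbc]; ring
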